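/- Let A ⊆ ℝⁿ be a finite index set of data points in a node, with nonempty subsets A⁺, A⁻ partitioning A. Let N = |A|, p⁺ = |A⁺|/N, p⁻ = |A⁻|/N, and for a vector Y ∈ ℝ^A let Ȳ_S denote the mean of Y over S. Define the impurity gain Δ = (1/N)∑_{i∈A}(Y_i − Ȳ_A)² − p⁺·(1/|A⁺|)∑_{i∈A⁺}(Y_i − Ȳ_{A⁺})² − p⁻·(1/|A⁻|)∑_{i∈A⁻}(Y_i − Ȳ_{A⁻})². Define the decision stump Ŷ(i) = p⁻/√(p⁺p⁻) if i ∈ A⁺ and Ŷ(i) = −p⁺/√(p⁺p⁻) if i ∈ A⁻. Then Δ = ((1/N)∑_{i∈A}(Y_i − Ȳ_A)·Ŷ(i))². -/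
import Mathlib


open Finset

private lemma sum_sq_sub (ι : Type*) (Y : ι → ℝ) (S : Finset ι) (c : ℝ) :
    ∑ i ∈ S, (Y i - c) ^ 2
      = ∑ i ∈ S, (Y i)^2 - 2*c*(∑ i ∈ S, Y i) + (S.card : ℝ) * c^2 := by
  have : ∀ i ∈ S, (Y i - c)^2 = (Y i)^2 - 2*c*(Y i) + c^2 := by
    intro i _; ring
  rw [Finset.sum_congr rfl this, Finset.sum_add_distrib, Finset.sum_sub_distrib,
    ← Finset.mul_sum, Finset.sum_const, nsmul_eq_mul]

private lemma sum_mul_const (ι : Type*) (Y : ι → ℝ) (S : Finset ι) (c k : ℝ) :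
    ∑ i ∈ S, (Y i - c) * k = ((∑ i ∈ S, Y i) - (S.card : ℝ) * c) * k := by
  rw [← Finset.sum_mul, Finset.sum_sub_distrib, Finset.sum_const, nsmul_eq_mul]

set_option maxHeartbeats 1600000 in
/-- The CART variance impurity gain of any binary partition of a node equals the
squared empirical inner product between the centered responses and the
normalized decision stump. -/
theorem impurity_gain_eq_sq_inner {ι : Type*} [DecidableEq ι]
    (A Ap Am : Finset ι) (hunion : Ap ∪ Am = A) (hdisj : Disjoint Ap Am)
    (hpne : Ap.Nonempty) (hmne : Am.Nonempty)
    (Y : ι → ℝ)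
    (N pp pm : ℝ) (hN : N = A.card)
    (hpp : pp = (Ap.card : ℝ) / N) (hpm : pm = (Am.card : ℝ) / N)
    (Ybar : Finset ι → ℝ) (hYbar : ∀ S : Finset ι, Ybar S = (∑ i ∈ S, Y i) / S.card)
    (Δ : ℝ)
    (hΔ : Δ = (1 / N) * ∑ i ∈ A, (Y i - Ybar A) ^ 2
        - pp * ((1 / (Ap.card : ℝ)) * ∑ i ∈ Ap, (Y i - Ybar Ap) ^ 2)
        - pm * ((1 / (Am.card : ℝ)) * ∑ i ∈ Am, (Y i - Ybar Am) ^ 2))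
    (Yhat : ι → ℝ)
    (hYhatp : ∀ i ∈ Ap, Yhat i = pm / Real.sqrt (pp * pm))
    (hYhatm : ∀ i ∈ Am, Yhat i = -pp / Real.sqrt (pp * pm)) :
    Δ = ((1 / N) * ∑ i ∈ A, (Y i - Ybar A) * Yhat i) ^ 2 := by
  subst hunion
  set a : ℝ := (Ap.card : ℝ) with ha'
  set b : ℝ := (Am.card : ℝ) with hb'
  have ha : (0:ℝ) < a := by rw [ha']; exact_mod_cast Finset.card_pos.mpr hpne
  have hb : (0:ℝ) < b := by rw [hb']; exact_mod_cast Finset.card_pos.mpr hmne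
  have hNab : N = a + b := by
    rw [hN, Finset.card_union_of_disjoint hdisj]; push_cast; ring
  have hN0 : N ≠ 0 := by rw [hNab]; positivity
  have hppv : pp = a / N := hpp
  have hpmv : pm = b / N := hpm
  have hpp0 : 0 < pp := by rw [hppv, hNab]; positivity
  have hpm0 : 0 < pm := by rw [hpmv, hNab]; positivity
  set s : ℝ := Real.sqrt (pp * pm) with hs'
  have hs2 : s ^ 2 = pp * pm := Real.sq_sqrt (by positivity)
  have hs0 : s ≠ 0 := by
    have : 0 < s := Real.sqrt_pos.mpr (by positivity); linarith
  set Sp : ℝ := ∑ i ∈ Ap, Y i with hSp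
  set Sm : ℝ := ∑ i ∈ Am, Y i with hSm
  set Qp : ℝ := ∑ i ∈ Ap, (Y i)^2 with hQp
  set Qm : ℝ := ∑ i ∈ Am, (Y i)^2 with hQm
  have hcardA : ((Ap ∪ Am).card : ℝ) = N := by rw [hN]
  have hbarA : Ybar (Ap ∪ Am) = (Sp + Sm) / N := by
    rw [hYbar, Finset.sum_union hdisj, hcardA]
  have hbarp : Ybar Ap = Sp / a := hYbar Ap
  have hbarm : Ybar Am = Sm / b := hYbar Am
  -- sums of squared deviations
  have e1 : ∑ i ∈ Ap ∪ Am, (Y i - Ybar (Ap ∪ Am)) ^ 2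
      = Qp + Qm - 2 * ((Sp+Sm)/N) * (Sp + Sm) + N * ((Sp+Sm)/N)^2 := by
    rw [sum_sq_sub, hbarA, Finset.sum_union hdisj, Finset.sum_union hdisj, hcardA]
  have e2 : ∑ i ∈ Ap, (Y i - Ybar Ap) ^ 2
      = Qp - 2 * (Sp/a) * Sp + a * (Sp/a)^2 := by
    rw [sum_sq_sub, hbarp]
  have e3 : ∑ i ∈ Am, (Y i - Ybar Am) ^ 2
      = Qm - 2 * (Sm/b) * Sm + b * (Sm/b)^2 := by
    rw [sum_sq_sub, hbarm]
  -- inner product sum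
  have e4 : ∑ i ∈ Ap ∪ Am, (Y i - Ybar (Ap ∪ Am)) * Yhat i
      = (Sp - a * ((Sp+Sm)/N)) * (pm / s) + (Sm - b * ((Sp+Sm)/N)) * (-pp / s) := by
    rw [Finset.sum_union hdisj]
    congr 1
    · rw [Finset.sum_congr rfl (fun i hi => by rw [hYhatp i hi, hbarA]),
        sum_mul_const]
    · rw [Finset.sum_congr rfl (fun i hi => by rw [hYhatm i hi, hbarA]),
        sum_mul_const]
  rw [hΔ, e1, e2, e3, e4, hppv, hpmv, hNab]
  rw [hppv, hpmv, hNab] at hs2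
  have hab0 : a + b ≠ 0 := by positivity
  have key : (1/(a+b)) * ((Sp - a * ((Sp+Sm)/(a+b))) * (b/(a+b)/s)
      + (Sm - b * ((Sp+Sm)/(a+b))) * (-(a/(a+b))/s))
      = ((Sp - a * ((Sp+Sm)/(a+b))) * b - (Sm - b * ((Sp+Sm)/(a+b))) * a)
        / ((a+b)^2*s) := by
    field_simp
    ring
  rw [key]
  rw [div_pow ((Sp - a * ((Sp+Sm)/(a+b))) * b - (Sm - b * ((Sp+Sm)/(a+b))) * a), mul_pow, hs2]
  field_simp
  ring
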